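/- Let n ≥ 2, let Δ_n ⊆ ℝ^n be the probability simplex, let α, η > 0, L ≥ 0, and let R : Δ_n → ℝ be α-strongly convex with respect to the Euclidean norm and L-Lipschitz with respect to the ℓ1 norm. Fix U ∈ ℝ^n and j ∈ [n] with U_j ≤ max_{j'∈[n]} U_{j'}. Let y* be the unique maximizer over Δ_n of Φ(y) = ⟨U, y⟩ − R(y)/η, and let y♭ be the unique maximizer of Φ over the face { y ∈ Δ_n : y_j = 0 }. If y*_j ≤ γ for some γ ≥ 0, then ‖y* − y♭‖₂ ≤ 2·√(Lγ/α). -/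

import Mathlib

open Finset

noncomputable section

/-- The FTRL objective `Φ(y) = ⟨U, y⟩ − R(y)/η`. -/
def ftrlObj {n : ℕ} (U : Fin n → ℝ) (R : (Fin n → ℝ) → ℝ) (η : ℝ) (y : Fin n → ℝ) : ℝ :=
  (∑ i, U i * y i) - R y / η

/-- Auxiliary limit lemma: if `(1-θ)X ≤ Y` for all `θ ∈ (0,1)` and `X ≥ 0`, then `X ≤ Y`. -/
private lemma aux_le_of_forall {X Y : ℝ} (hX : 0 ≤ X)
    (h : ∀ θ : ℝ, 0 < θ → θ < 1 → (1 - θ) * X ≤ Y) : X ≤ Y := by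
  by_contra hc
  push_neg at hc
  have h2 := h (1/2) (by norm_num) (by norm_num)
  have hY : 0 ≤ Y := by linarith
  have hX0 : 0 < X := lt_of_le_of_lt hY hc
  have hθ0 : 0 < (X - Y)/(2*X) := div_pos (by linarith) (by linarith)
  have hθ1 : (X - Y)/(2*X) < 1 := by
    rw [div_lt_one (by linarith)]; linarith
  have h3 := h _ hθ0 hθ1
  have h4 : (1 - (X-Y)/(2*X))*X = X - (X-Y)/2 := by
    field_simp
  rw [h4] at h3
  linarith

/-- Linear part of a convex combination. -/
private lemma sum_comb {n : ℕ} (U x z : Fin n → ℝ) (a b : ℝ) :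
    ∑ i, U i * (a • x + b • z) i = a * (∑ i, U i * x i) + b * (∑ i, U i * z i) := by
  simp only [Pi.add_apply, Pi.smul_apply, smul_eq_mul, Finset.mul_sum, ← Finset.sum_add_distrib]
  exact Finset.sum_congr rfl (fun i _ => by ring)

/-- Vertex of the simplex. -/
private lemma vertexMemStdSimplex {n : ℕ} (j : Fin n) :
    (fun i => if i = j then (1:ℝ) else 0) ∈ stdSimplex ℝ (Fin n) := by
  refine ⟨fun i => ?_, ?_⟩
  · dsimp only; split <;> norm_num
  · simp [Finset.sum_ite_eq']

/-- Rescale an `ftrlObj` inequality by `η`. -/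
private lemma ftrl_scaled {n : ℕ} {U : Fin n → ℝ} {R : (Fin n → ℝ) → ℝ} {η : ℝ} (hη : 0 < η)
    {x y : Fin n → ℝ} (h : ftrlObj U R η x ≤ ftrlObj U R η y) :
    η * (∑ i, U i * x i) - R x ≤ η * (∑ i, U i * y i) - R y := by
  unfold ftrlObj at h
  have h2 := mul_le_mul_of_nonneg_left h hη.le
  have e1 : η * ((∑ i, U i * x i) - R x / η) = η * (∑ i, U i * x i) - R x := by
    field_simp
  have e2 : η * ((∑ i, U i * y i) - R y / η) = η * (∑ i, U i * y i) - R y := by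
    field_simp
  rw [e1, e2] at h2
  exact h2

set_option maxHeartbeats 2000000 in
/-- key FTRL estimate. If `R` is `α`-strongly convex (Euclidean norm) and
`L`-Lipschitz (ℓ1 norm) on the simplex, `y*` is the unique maximizer of
`Φ(y) = ⟨U,y⟩ − R(y)/η` over `Δ_n`, `y♭` is the unique maximizer of `Φ` over the face
`{y : y_j = 0}`, and `y*_j ≤ γ`, then `‖y* − y♭‖₂ ≤ 2√(Lγ/α)`. -/
theorem ftrl_restriction_estimate
    (n : ℕ) (hn : 2 ≤ n) (α η L : ℝ) (hα : 0 < α) (hη : 0 < η) (hL : 0 ≤ L)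
    (R : (Fin n → ℝ) → ℝ)
    (hsc : ∀ y ∈ stdSimplex ℝ (Fin n), ∀ y' ∈ stdSimplex ℝ (Fin n), ∀ t ∈ Set.Icc (0 : ℝ) 1,
      R (t • y + (1 - t) • y') ≤
        t * R y + (1 - t) * R y' - α / 2 * t * (1 - t) * ∑ i, (y i - y' i) ^ 2)
    (hlip : ∀ y ∈ stdSimplex ℝ (Fin n), ∀ y' ∈ stdSimplex ℝ (Fin n),
      |R y - R y'| ≤ L * ∑ i, |y i - y' i|)
    (U : Fin n → ℝ) (j : Fin n) (hUj : U j ≤ ⨆ j' : Fin n, U j')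
    (ystar : Fin n → ℝ) (hy1 : ystar ∈ stdSimplex ℝ (Fin n))
    (hy2 : ∀ y ∈ stdSimplex ℝ (Fin n), ftrlObj U R η y ≤ ftrlObj U R η ystar)
    (hy3 : ∀ y ∈ stdSimplex ℝ (Fin n), ftrlObj U R η y = ftrlObj U R η ystar → y = ystar)
    (yflat : Fin n → ℝ) (hz1 : yflat ∈ stdSimplex ℝ (Fin n)) (hzj : yflat j = 0)
    (hz2 : ∀ y ∈ stdSimplex ℝ (Fin n), y j = 0 → ftrlObj U R η y ≤ ftrlObj U R η yflat)
    (hz3 : ∀ y ∈ stdSimplex ℝ (Fin n), y j = 0 →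
      ftrlObj U R η y = ftrlObj U R η yflat → y = yflat)
    (γ : ℝ) (hγ : 0 ≤ γ) (hyj : ystar j ≤ γ) :
    Real.sqrt (∑ i, (ystar i - yflat i) ^ 2) ≤ 2 * Real.sqrt (L * γ / α) := by
  have hy1a : ∀ i, 0 ≤ ystar i := hy1.1
  have hy1b : ∑ i, ystar i = 1 := hy1.2
  have hz1a : ∀ i, 0 ≤ yflat i := hz1.1
  have hz1b : ∑ i, yflat i = 1 := hz1.2
  set s : ℝ := ystar j with hs
  have hs0 : 0 ≤ s := hy1a j
  have hs1 : s ≤ 1 := by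
    have h1 := Finset.single_le_sum (f := ystar) (fun k _ => hy1a k) (Finset.mem_univ j)
    rw [hy1b] at h1; exact h1
  set Q : ℝ := ∑ i, (ystar i - yflat i) ^ 2 with hQdef
  have hQ0 : 0 ≤ Q := Finset.sum_nonneg (fun i _ => sq_nonneg _)
  -- the key estimate
  have hkey : α * Q ≤ 4 * L * γ := by
    rcases eq_or_lt_of_le hs1 with hseq | hslt
    · -- case s = 1 : use Q ≤ 2, α ≤ 2L, γ ≥ 1
      have hγ1 : (1:ℝ) ≤ γ := by rw [← hseq]; exact hyj
      -- Q ≤ 2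
      have hyb1 : ∀ i, ystar i ≤ 1 := by
        intro i
        have h1 := Finset.single_le_sum (f := ystar) (fun k _ => hy1a k) (Finset.mem_univ i)
        rw [hy1b] at h1; exact h1
      have hzb1 : ∀ i, yflat i ≤ 1 := by
        intro i
        have h1 := Finset.single_le_sum (f := yflat) (fun k _ => hz1a k) (Finset.mem_univ i)
        rw [hz1b] at h1; exact h1
      have hQ2 : Q ≤ 2 := by
        have h1 : ∀ i ∈ Finset.univ, (ystar i - yflat i) ^ 2 ≤ ystar i + yflat i := by
          intro i _
          have := hy1a i; have := hz1a i; have := hyb1 i; have := hzb1 i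
          nlinarith
        have h2 := Finset.sum_le_sum h1
        rw [Finset.sum_add_distrib, hy1b, hz1b] at h2
        rw [hQdef]; linarith
      -- α ≤ 2L
      obtain ⟨i, hij⟩ : ∃ i : Fin n, i ≠ j := by
        rcases Nat.eq_zero_or_pos (j : ℕ) with hj | hj
        · exact ⟨⟨1, by omega⟩, Fin.ne_of_val_ne (by simp [hj])⟩
        · exact ⟨⟨0, by omega⟩, Fin.ne_of_val_ne (by simpa using hj.ne)⟩
      set ei : Fin n → ℝ := fun k => if k = i then (1:ℝ) else 0 with heidef
      set ejv : Fin n → ℝ := fun k => if k = j then (1:ℝ) else 0 with hejdef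
      have hei : ei ∈ stdSimplex ℝ (Fin n) := vertexMemStdSimplex i
      have hej : ejv ∈ stdSimplex ℝ (Fin n) := vertexMemStdSimplex j
      have hval : ∀ k, (ei k - ejv k) ^ 2 = ei k + ejv k := by
        intro k
        rw [heidef, hejdef]; dsimp only
        by_cases h1 : k = i <;> by_cases h2 : k = j
        · exact absurd (h1 ▸ h2) hij
        · rw [if_pos h1, if_neg h2]; norm_num
        · rw [if_neg h1, if_pos h2]; norm_num
        · rw [if_neg h1, if_neg h2]; norm_num
      have hvala : ∀ k, |ei k - ejv k| = ei k + ejv k := by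
        intro k
        rw [heidef, hejdef]; dsimp only
        by_cases h1 : k = i <;> by_cases h2 : k = j
        · exact absurd (h1 ▸ h2) hij
        · rw [if_pos h1, if_neg h2]; norm_num
        · rw [if_neg h1, if_pos h2]; norm_num
        · rw [if_neg h1, if_neg h2]; norm_num
      have hsumei : ∑ k, ei k = 1 := hei.2
      have hsumej : ∑ k, ejv k = 1 := hej.2
      have hsum2 : ∑ k, (ei k - ejv k) ^ 2 = 2 := by
        rw [Finset.sum_congr rfl (fun k _ => hval k), Finset.sum_add_distrib, hsumei, hsumej]
        norm_num
      have habs2 : ∑ k, |ei k - ejv k| = 2 := by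
        rw [Finset.sum_congr rfl (fun k _ => hvala k), Finset.sum_add_distrib, hsumei, hsumej]
        norm_num
      have hα2L : α ≤ 2 * L := by
        apply aux_le_of_forall hα.le
        intro ε hε0 hε1
        have hpε : (ε • ei + (1 - ε) • ejv) ∈ stdSimplex ℝ (Fin n) :=
          (convex_stdSimplex ℝ (Fin n)) hei hej hε0.le (by linarith) (by ring)
        have hp1ε : ((1-ε) • ei + (1 - (1-ε)) • ejv) ∈ stdSimplex ℝ (Fin n) :=
          (convex_stdSimplex ℝ (Fin n)) hei hej (by linarith) (by simp [sub_sub_cancel]; linarith)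
            (by ring)
        have hsc1 := hsc ei hei ejv hej ε ⟨hε0.le, hε1.le⟩
        have hsc2 := hsc ei hei ejv hej (1-ε) ⟨by linarith, by linarith⟩
        rw [hsum2] at hsc1 hsc2
        -- Lipschitz bounds
        have hd1 : ∀ k, |ejv k - (ε • ei + (1 - ε) • ejv) k| = ε * |ei k - ejv k| := by
          intro k
          simp only [Pi.add_apply, Pi.smul_apply, smul_eq_mul]
          rw [show ejv k - (ε * ei k + (1 - ε) * ejv k) = ε * (ejv k - ei k) by ring,
            abs_mul, abs_of_nonneg hε0.le, abs_sub_comm]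
        have hd2 : ∀ k, |ei k - ((1-ε) • ei + (1 - (1-ε)) • ejv) k| = ε * |ei k - ejv k| := by
          intro k
          simp only [Pi.add_apply, Pi.smul_apply, smul_eq_mul]
          rw [show ei k - ((1-ε) * ei k + (1 - (1-ε)) * ejv k) = ε * (ei k - ejv k) by ring,
            abs_mul, abs_of_nonneg hε0.le]
        have hl1 := hlip ejv hej (ε • ei + (1 - ε) • ejv) hpε
        have hl2 := hlip ei hei ((1-ε) • ei + (1 - (1-ε)) • ejv) hp1ε
        rw [Finset.sum_congr rfl (fun k _ => hd1 k), ← Finset.mul_sum, habs2] at hl1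
        rw [Finset.sum_congr rfl (fun k _ => hd2 k), ← Finset.mul_sum, habs2] at hl2
        have hb1 : R ejv - R (ε • ei + (1 - ε) • ejv) ≤ L * (ε * 2) :=
          le_trans (le_abs_self _) hl1
        have hb2 : R ei - R ((1-ε) • ei + (1 - (1-ε)) • ejv) ≤ L * (ε * 2) :=
          le_trans (le_abs_self _) hl2
        -- combine: 2αε(1-ε) ≤ 4Lε
        have hcomb : ε * (2 * ((1 - ε) * α)) ≤ ε * (2 * (2 * L)) := by nlinarith
        have := (mul_le_mul_iff_right₀ hε0).mp hcomb
        linarith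
      nlinarith [hQ2, hγ1, hα2L, hα.le, hL]
    · -- main case : s < 1
      have h1s : 0 < 1 - s := by linarith
      set σ : ℝ := s / (1 - s) with hσdef
      have hσ0 : 0 ≤ σ := div_nonneg hs0 h1s.le
      have hσs : (1 - s) * σ = s := by
        rw [hσdef]; field_simp
      set ej : Fin n → ℝ := fun k => if k = j then (1:ℝ) else 0 with hejdef
      have hej : ej ∈ stdSimplex ℝ (Fin n) := vertexMemStdSimplex j
      have hsumoff : ∑ i ∈ Finset.univ.erase j, ystar i = 1 - s := by
        have h1 := Finset.add_sum_erase Finset.univ ystar (Finset.mem_univ j)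
        rw [hy1b] at h1; linarith
      -- ℓ1 distance between e_j and ystar
      have hS1 : ∑ i, |ej i - ystar i| = 2 * (1 - s) := by
        have hper : ∀ i, |ej i - ystar i| = if i = j then 1 - s else ystar i := by
          intro i
          rw [hejdef]; dsimp only
          by_cases h : i = j
          · rw [if_pos h, if_pos h, h, abs_of_nonneg (by linarith)]
          · rw [if_neg h, if_neg h, zero_sub, abs_neg, abs_of_nonneg (hy1a i)]
        rw [Finset.sum_congr rfl (fun i _ => hper i)]
        have h1 := Finset.add_sum_erase Finset.univ
          (fun i => if i = j then 1 - s else ystar i) (Finset.mem_univ j)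
        have h2 : ∑ i ∈ Finset.univ.erase j, (if i = j then 1 - s else ystar i)
            = ∑ i ∈ Finset.univ.erase j, ystar i := by
          apply Finset.sum_congr rfl
          intro i hi
          rw [if_neg (Finset.mem_erase.mp hi).1]
        rw [h2, hsumoff] at h1
        rw [← h1]
        simp; ring
      -- the renormalized point
      set yhat : Fin n → ℝ := fun i => if i = j then 0 else ystar i / (1 - s) with hyhatdef
      have hyhatj : yhat j = 0 := by rw [hyhatdef]; simp
      have hyhat_mem : yhat ∈ stdSimplex ℝ (Fin n) := by
        refine ⟨fun i => ?_, ?_⟩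
        · rw [hyhatdef]; dsimp only; split
          · exact le_rfl
          · exact div_nonneg (hy1a i) h1s.le
        · have h1 := Finset.add_sum_erase Finset.univ yhat (Finset.mem_univ j)
          have h2 : ∑ i ∈ Finset.univ.erase j, yhat i = 1 := by
            have h3 : ∑ i ∈ Finset.univ.erase j, yhat i
                = ∑ i ∈ Finset.univ.erase j, ystar i / (1 - s) := by
              apply Finset.sum_congr rfl
              intro i hi
              rw [hyhatdef]; dsimp only; rw [if_neg (Finset.mem_erase.mp hi).1]
            rw [h3, ← Finset.sum_div, hsumoff]
            field_simp
          rw [← h1, hyhatj, h2]; ring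
      have hdiff : ∀ i, ystar i - yhat i = σ * (ej i - ystar i) := by
        intro i
        rw [hyhatdef, hejdef]; dsimp only
        by_cases h : i = j
        · rw [if_pos h, if_pos h, h]
          rw [← hs]
          rw [show σ * (1 - s) = (1-s) * σ by ring, hσs]; ring
        · rw [if_neg h, if_neg h]
          rw [hσdef]; field_simp; ring
      -- linear quantities
      set A : ℝ := ∑ i, U i * ystar i with hA
      set B : ℝ := ∑ i, U i * yflat i with hB
      set C : ℝ := ∑ i, U i * yhat i with hC
      have hsumUej : ∑ i, U i * ej i = U j := by
        rw [hejdef]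
        simp [mul_ite, mul_one, mul_zero, Finset.sum_ite_eq']
      have hAC : A - C = σ * (U j - A) := by
        rw [hA, hC, ← Finset.sum_sub_distrib]
        have h1 : ∀ i, U i * ystar i - U i * yhat i = σ * (U i * ej i - U i * ystar i) := by
          intro i
          calc U i * ystar i - U i * yhat i = U i * (ystar i - yhat i) := by ring
            _ = U i * (σ * (ej i - ystar i)) := by rw [hdiff i]
            _ = σ * (U i * ej i - U i * ystar i) := by ring
        rw [Finset.sum_congr rfl (fun i _ => h1 i), ← Finset.mul_sum,
          Finset.sum_sub_distrib, hsumUej, ← hA]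
      -- optimality against e_j plus Lipschitz
      have hUjA : η * (U j - A) ≤ 2 * L * (1 - s) := by
        have h1 := ftrl_scaled hη (hy2 ej hej)
        rw [hsumUej, ← hA] at h1
        have h2 := hlip ej hej ystar hy1
        rw [hS1] at h2
        have h3 : R ej - R ystar ≤ L * (2 * (1-s)) := le_trans (le_abs_self _) h2
        nlinarith [h1, h3]
      -- main θ-family estimate
      have hmain : α * Q ≤ 4 * L * s := by
        apply aux_le_of_forall (by positivity)
        intro θ hθ0 hθ1
        have hθ0' : (0:ℝ) ≤ θ := hθ0.le
        have hθ1' : θ ≤ 1 := hθ1.le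
        -- the three points
        have hm_mem : (θ • ystar + (1 - θ) • yflat) ∈ stdSimplex ℝ (Fin n) :=
          (convex_stdSimplex ℝ (Fin n)) hy1 hz1 hθ0' (by linarith) (by ring)
        have hp2_mem : ((1-θ) • ystar + (1 - (1-θ)) • yflat) ∈ stdSimplex ℝ (Fin n) :=
          (convex_stdSimplex ℝ (Fin n)) hy1 hz1 (by linarith) (by rw [sub_sub_cancel]; linarith)
            (by ring)
        have hmf_mem : (θ • yhat + (1 - θ) • yflat) ∈ stdSimplex ℝ (Fin n) :=
          (convex_stdSimplex ℝ (Fin n)) hyhat_mem hz1 hθ0' (by linarith) (by ring)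
        have hmf_j : (θ • yhat + (1 - θ) • yflat) j = 0 := by
          simp only [Pi.add_apply, Pi.smul_apply, smul_eq_mul, hyhatj, hzj]
          ring
        -- strong convexity
        have hsc1 := hsc ystar hy1 yflat hz1 θ ⟨hθ0', hθ1'⟩
        have hsc2 := hsc ystar hy1 yflat hz1 (1-θ) ⟨by linarith, by linarith⟩
        rw [sub_sub_cancel] at hsc2
        rw [← hQdef] at hsc1 hsc2
        -- optimality at the two mixtures
        have hy2m := ftrl_scaled hη (hy2 ((1-θ) • ystar + (1 - (1-θ)) • yflat) hp2_mem)
        rw [sum_comb, ← hA, ← hB, sub_sub_cancel] at hy2m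
        have hz2m := ftrl_scaled hη
          (hz2 (θ • yhat + (1 - θ) • yflat) hmf_mem hmf_j)
        rw [sum_comb, ← hC, ← hB] at hz2m
        -- Lipschitz between m and mflat
        have hptd : ∀ i, (θ • ystar + (1 - θ) • yflat) i - (θ • yhat + (1 - θ) • yflat) i
            = (θ * σ) * (ej i - ystar i) := by
          intro i
          simp only [Pi.add_apply, Pi.smul_apply, smul_eq_mul]
          calc θ * ystar i + (1 - θ) * yflat i - (θ * yhat i + (1 - θ) * yflat i)
              = θ * (ystar i - yhat i) := by ring
            _ = θ * (σ * (ej i - ystar i)) := by rw [hdiff i]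
            _ = (θ * σ) * (ej i - ystar i) := by ring
        have habsd : ∑ i, |(θ • yhat + (1 - θ) • yflat) i - (θ • ystar + (1 - θ) • yflat) i|
            = θ * σ * (2 * (1 - s)) := by
          have h1 : ∀ i, |(θ • yhat + (1 - θ) • yflat) i - (θ • ystar + (1 - θ) • yflat) i|
              = (θ * σ) * |ej i - ystar i| := by
            intro i
            rw [abs_sub_comm, hptd i, abs_mul, abs_of_nonneg (by positivity)]
          rw [Finset.sum_congr rfl (fun i _ => h1 i), ← Finset.mul_sum, hS1]
        have hlipm := hlip (θ • yhat + (1 - θ) • yflat) hmf_mem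
          (θ • ystar + (1 - θ) • yflat) hm_mem
        rw [habsd] at hlipm
        have hRd : R (θ • yhat + (1 - θ) • yflat) - R (θ • ystar + (1 - θ) • yflat)
            ≤ L * (θ * σ * (2 * (1 - s))) := le_trans (le_abs_self _) hlipm
        -- products and rewrites
        have hLσ : L * (θ * σ * (2 * (1 - s))) = 2 * L * (θ * s) := by
          rw [show θ * σ * (2 * (1-s)) = 2 * θ * ((1-s) * σ) by ring, hσs]; ring
        rw [hLσ] at hRd
        have hηAC : η * θ * (A - C) ≤ 2 * L * (θ * s) := by
          have h1 : η * θ * (A - C) = (θ * σ) * (η * (U j - A)) := by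
            rw [hAC]; ring
          rw [h1]
          calc (θ * σ) * (η * (U j - A)) ≤ (θ * σ) * (2 * L * (1 - s)) :=
                mul_le_mul_of_nonneg_left hUjA (by positivity)
            _ = 2 * L * (θ * s) := by
                rw [show (θ * σ) * (2 * L * (1-s)) = 2 * L * θ * ((1-s) * σ) by ring, hσs]; ring
        -- sums over the mixture m
        have hsum_m : ∑ i, U i * (θ • ystar + (1 - θ) • yflat) i = θ * A + (1-θ) * B := by
          rw [sum_comb, ← hA, ← hB]
        -- E1 : via the face maximizer
        have hE1 : η * (θ * A + (1-θ) * B)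
            - (θ * R ystar + (1 - θ) * R yflat - α / 2 * θ * (1 - θ) * Q)
            ≤ η * B - R yflat + 4 * L * (θ * s) := by
          have hscm := hsc1
          -- η * linear(m) - R m ≥ LHS
          have h2 : η * (θ * A + (1-θ) * B)
              - (θ * R ystar + (1 - θ) * R yflat - α / 2 * θ * (1 - θ) * Q)
              ≤ η * (θ * A + (1-θ) * B) - R (θ • ystar + (1 - θ) • yflat) := by
            nlinarith [hscm]
          have h3 : η * (θ * A + (1-θ) * B) - R (θ • ystar + (1 - θ) • yflat)
              ≤ η * B - R yflat + 4 * L * (θ * s) := by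
            -- = [η lin(mflat) - R mflat] + ηθ(A - C) + (R mflat - R m)
            nlinarith [hz2m, hηAC, hRd]
          linarith
        -- E2 : quadratic growth at ystar
        have hE2 : η * ((1-θ) * A + θ * B)
            - ((1-θ) * R ystar + θ * R yflat - α / 2 * (1-θ) * θ * Q)
            ≤ η * A - R ystar := by
          nlinarith [hy2m, hsc2]
        have hfin : θ * ((1 - θ) * (α * Q)) ≤ θ * (4 * L * s) := by nlinarith [hE1, hE2]
        exact (mul_le_mul_iff_right₀ hθ0).mp hfin
      nlinarith [hmain, mul_le_mul_of_nonneg_left hyj (by positivity : (0:ℝ) ≤ 4 * L)]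
  -- conclude
  have hQle : Q ≤ 4 * L * γ / α := (le_div_iff₀ hα).mpr (by nlinarith)
  calc Real.sqrt Q ≤ Real.sqrt (4 * L * γ / α) := Real.sqrt_le_sqrt hQle
    _ = 2 * Real.sqrt (L * γ / α) := by
        rw [show 4 * L * γ / α = 4 * (L * γ / α) by ring,
          Real.sqrt_mul (by norm_num : (0:ℝ) ≤ 4),
          show (4:ℝ) = 2^2 by norm_num, Real.sqrt_sq (by norm_num : (0:ℝ) ≤ 2)]
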